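/- Let T be a binary tree on n nodes and P a path from a node r down the tree of length ℓ (each node on P an ancestor of the next). With s(v) the subtree size of v and φ(v) = g(log₂(s(parent v)/s(v))) where g(t)=t/(log₂(2+t))², the sum Σ_{v∈P, v≠r} φ(v) ≤ ℓ·g(log₂(s(r))/ℓ) ≤ C·log₂(s(r)) for an absolute constant C. -/

import Mathlib

open Real Set

noncomputable def g (t : ℝ) : ℝ := t / (Real.logb 2 (2 + t)) ^ 2

/-- Padé lower bound for log. -/
lemma pade {x : ℝ} (hx : 1 ≤ x) : 2 * (x - 1) / (x + 1) ≤ Real.log x := by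
  have hd : ∀ y : ℝ, 0 < y →
      HasDerivAt (fun z : ℝ => Real.log z - 2 * (z - 1) / (z + 1))
        ((y - 1) ^ 2 / (y * (y + 1) ^ 2)) y := by
    intro y hy
    have hy1 : y + 1 ≠ 0 := by linarith
    have h1 : HasDerivAt (fun z : ℝ => Real.log z) y⁻¹ y := Real.hasDerivAt_log hy.ne'
    have h2 : HasDerivAt (fun z : ℝ => 2 * (z - 1)) 2 y := by
      simpa using ((hasDerivAt_id y).sub_const 1).const_mul 2
    have h3 : HasDerivAt (fun z : ℝ => z + 1) 1 y := (hasDerivAt_id y).add_const 1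
    have h4 := h2.div h3 hy1
    have h5 := h1.sub h4
    refine h5.congr_deriv ?_
    field_simp
    ring
  have mono : MonotoneOn (fun z : ℝ => Real.log z - 2 * (z - 1) / (z + 1)) (Ici 1) := by
    apply monotoneOn_of_deriv_nonneg (convex_Ici 1)
    · intro y hy
      exact (hd y (by exact lt_of_lt_of_le one_pos hy)).differentiableAt.continuousAt.continuousWithinAt
    · intro y hy
      rw [interior_Ici] at hy
      exact (hd y (by linarith [mem_Ioi.mp hy])).differentiableAt.differentiableWithinAt
    · intro y hy
      rw [interior_Ici] at hy
      have hy' : (0:ℝ) < y := by linarith [mem_Ioi.mp hy]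
      rw [(hd y hy').deriv]
      positivity
  have h := mono (self_mem_Ici) (mem_Ici.mpr hx) hx
  simp only [Real.log_one] at h
  norm_num at h
  linarith

/-- The key inequality for concavity, in terms of `y = 2 + t`. -/
lemma key_ineq' {y : ℝ} (hy2 : 2 ≤ y) : 3 * (y - 2) ≤ (y + 2) * Real.log y := by
  rcases le_total y 5 with h5 | h5
  · have hp := pade (x := y) (by linarith)
    have hy1 : (0:ℝ) < y + 1 := by linarith
    have h1 : 3 * (y - 2) ≤ (y + 2) * (2 * (y - 1) / (y + 1)) := by
      rw [mul_div_assoc', le_div_iff₀ hy1]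
      nlinarith [mul_nonneg (sub_nonneg.mpr hy2) (sub_nonneg.mpr h5)]
    have h2 : (y + 2) * (2 * (y - 1) / (y + 1)) ≤ (y + 2) * Real.log y :=
      mul_le_mul_of_nonneg_left hp (by linarith)
    linarith
  · have hp := pade (x := y / 4) (by linarith)
    have hy4 : (0:ℝ) < y + 4 := by linarith
    have hlog4 : Real.log y = 2 * Real.log 2 + Real.log (y / 4) := by
      rw [Real.log_div (by linarith) (by norm_num)]
      rw [show (4:ℝ) = 2 ^ 2 by norm_num, Real.log_pow]
      push_cast; ring
    have e : 2 * (y / 4 - 1) / (y / 4 + 1) = 2 * (y - 4) / (y + 4) := by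
      rw [div_eq_div_iff (by linarith) hy4.ne']; ring
    rw [e] at hp
    set s : ℝ := 2 * (y - 4) / (y + 4) with hs
    have hq : s * (y + 4) = 2 * (y - 4) := by
      rw [hs, div_mul_cancel₀ _ hy4.ne']
    have hc : (0.6931471803 : ℝ) < Real.log 2 := Real.log_two_gt_d9
    have hlogy : 2 * Real.log 2 + s ≤ Real.log y := by rw [hlog4]; linarith
    have h1 : 3 * (y - 2) * (y + 4) ≤ (y + 2) * (2 * Real.log 2 * (y + 4) + 2 * (y - 4)) := by
      nlinarith [mul_nonneg (mul_nonneg (by linarith : (0:ℝ) ≤ 2 * Real.log 2 - 1)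
          (by linarith : (0:ℝ) ≤ y - 5)) (by linarith : (0:ℝ) ≤ y),
        mul_nonneg (by linarith : (0:ℝ) ≤ Real.log 2 - 0.6931471803) (by linarith : (0:ℝ) ≤ y)]
    have hq2 : (y + 2) * (s * (y + 4)) = (y + 2) * (2 * (y - 4)) := by rw [hq]
    have h2 : 3 * (y - 2) ≤ (y + 2) * (2 * Real.log 2 + s) := by
      rw [← mul_le_mul_iff_of_pos_right hy4]
      nlinarith [hq2, h1]
    have h3 : (y + 2) * (2 * Real.log 2 + s) ≤ (y + 2) * Real.log y :=
      mul_le_mul_of_nonneg_left hlogy (by linarith)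
    linarith

/-- The key inequality for concavity: `3t ≤ (4+t) log(2+t)` for `t ≥ 0`. -/
lemma key_ineq {t : ℝ} (ht : 0 ≤ t) : 3 * t ≤ (4 + t) * Real.log (2 + t) := by
  have h := key_ineq' (y := 2 + t) (by linarith)
  have : (2 + t) + 2 = 4 + t := by ring
  nlinarith [h]

lemma g_eq : g = fun t => t * (Real.log 2) ^ 2 / (Real.log (2 + t)) ^ 2 := by
  funext t
  simp only [g, Real.logb, div_pow, div_div_eq_mul_div]

/-- first derivative of `g` (as a formula). -/
noncomputable def gd1 (t : ℝ) : ℝ :=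
  (Real.log 2) ^ 2 * (Real.log (2 + t) * (2 + t) - 2 * t) / ((2 + t) * (Real.log (2 + t)) ^ 3)

/-- second derivative of `g` (as a formula). -/
noncomputable def gd2 (t : ℝ) : ℝ :=
  -2 * (Real.log 2) ^ 2 * ((4 + t) * Real.log (2 + t) - 3 * t)
    / ((2 + t) ^ 2 * (Real.log (2 + t)) ^ 4)

lemma hasDerivAt_logterm {t : ℝ} (ht : -1 < t) :
    HasDerivAt (fun z : ℝ => Real.log (2 + z)) (1 / (2 + t)) t := by
  have h0 : HasDerivAt (fun z : ℝ => 2 + z) 1 t := (hasDerivAt_id t).const_add 2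
  have := h0.log (by linarith : (2:ℝ) + t ≠ 0)
  simpa using this

lemma hasDerivAt_g {t : ℝ} (ht : -1 < t) :
    HasDerivAt (fun z => z * (Real.log 2) ^ 2 / (Real.log (2 + z)) ^ 2) (gd1 t) t := by
  have h2t : (0:ℝ) < 2 + t := by linarith
  have hL : (0:ℝ) < Real.log (2 + t) := Real.log_pos (by linarith)
  have hnum : HasDerivAt (fun z : ℝ => z * (Real.log 2) ^ 2) ((Real.log 2) ^ 2) t := by
    simpa using (hasDerivAt_id t).mul_const ((Real.log 2) ^ 2)
  have hden : HasDerivAt (fun z : ℝ => (Real.log (2 + z)) ^ 2)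
      (2 * (Real.log (2 + t)) ^ 1 * (1 / (2 + t))) t := by
    simpa using (hasDerivAt_logterm ht).fun_pow 2
  have h := hnum.div hden (by positivity)
  refine h.congr_deriv ?_
  unfold gd1
  field_simp

lemma hasDerivAt_gd1 {t : ℝ} (ht : -1 < t) : HasDerivAt gd1 (gd2 t) t := by
  have h2t : (0:ℝ) < 2 + t := by linarith
  have hL : (0:ℝ) < Real.log (2 + t) := Real.log_pos (by linarith)
  have hLd := hasDerivAt_logterm ht
  have hN : HasDerivAt (fun z : ℝ => Real.log (2 + z) * (2 + z) - 2 * z)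
      (Real.log (2 + t) - 1) t := by
    have h1 : HasDerivAt (fun z : ℝ => 2 + z) 1 t := (hasDerivAt_id t).const_add 2
    have h2 := hLd.mul h1
    have h3 : HasDerivAt (fun z : ℝ => 2 * z) 2 t := by
      simpa using (hasDerivAt_id t).const_mul 2
    have h4 := h2.sub h3
    refine h4.congr_deriv ?_
    field_simp
    ring
  have hD : HasDerivAt (fun z : ℝ => (2 + z) * (Real.log (2 + z)) ^ 3)
      ((Real.log (2 + t)) ^ 3 + 3 * (Real.log (2 + t)) ^ 2) t := by
    have h1 : HasDerivAt (fun z : ℝ => 2 + z) 1 t := (hasDerivAt_id t).const_add 2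
    have h2 : HasDerivAt (fun z : ℝ => (Real.log (2 + z)) ^ 3)
        (3 * (Real.log (2 + t)) ^ 2 * (1 / (2 + t))) t := by
      simpa using hLd.fun_pow 3
    have h3 := h1.mul h2
    refine h3.congr_deriv ?_
    field_simp
  have hND := hN.div hD (by positivity)
  have h := hND.const_mul ((Real.log 2) ^ 2)
  have heq : gd1 = fun z => (Real.log 2) ^ 2 *
      ((Real.log (2 + z) * (2 + z) - 2 * z) / ((2 + z) * (Real.log (2 + z)) ^ 3)) := by
    funext z; unfold gd1; rw [mul_div_assoc]
  rw [heq]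
  refine h.congr_deriv ?_
  unfold gd2
  field_simp
  ring

lemma g_concave : ConcaveOn ℝ (Ici 0) g := by
  rw [g_eq]
  apply concaveOn_of_hasDerivWithinAt2_nonpos (convex_Ici 0) (f' := gd1) (f'' := gd2)
  · intro x hx
    exact (hasDerivAt_g (by linarith [mem_Ici.mp hx] : (-1:ℝ) < x)).differentiableAt.continuousAt.continuousWithinAt
  · intro x hx
    rw [interior_Ici] at hx
    exact (hasDerivAt_g (by linarith [mem_Ioi.mp hx] : (-1:ℝ) < x)).hasDerivWithinAt
  · intro x hx
    rw [interior_Ici] at hx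
    exact (hasDerivAt_gd1 (by linarith [mem_Ioi.mp hx] : (-1:ℝ) < x)).hasDerivWithinAt
  · intro x hx
    rw [interior_Ici] at hx
    have hx' : (0:ℝ) < x := mem_Ioi.mp hx
    have hL : (0:ℝ) < Real.log (2 + x) := Real.log_pos (by linarith)
    unfold gd2
    apply div_nonpos_of_nonpos_of_nonneg
    · have hk := key_ineq hx'.le
      nlinarith [sq_nonneg (Real.log 2)]
    · positivity

lemma g_nonneg {t : ℝ} (ht : 0 ≤ t) : 0 ≤ g t := by
  unfold g
  positivity

lemma g_le_self {t : ℝ} (ht : 0 ≤ t) : g t ≤ t := by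
  have h1 : (1:ℝ) ≤ Real.logb 2 (2 + t) := by
    rw [Real.le_logb_iff_rpow_le one_lt_two (by linarith)]
    rw [Real.rpow_one]
    linarith
  have h2 : (1:ℝ) ≤ (Real.logb 2 (2 + t)) ^ 2 := by nlinarith
  exact div_le_self ht h2

theorem stmt_15 : ∃ C : ℝ, 0 < C ∧ ∀ (ℓ : ℕ), 1 ≤ ℓ → ∀ a : ℕ → ℝ,
    (∀ k, k < ℓ → 1 ≤ a k) → (∀ k, k + 1 < ℓ → a k ≤ a (k + 1)) →
    (∑ k ∈ Finset.range (ℓ - 1), g (Real.logb 2 (a (k + 1) / a k))) ≤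
        ℓ * g (Real.logb 2 (a (ℓ - 1)) / ℓ) ∧
    (ℓ : ℝ) * g (Real.logb 2 (a (ℓ - 1)) / ℓ) ≤ C * Real.logb 2 (a (ℓ - 1)) := by
  refine ⟨1, one_pos, ?_⟩
  intro ℓ hℓ a ha1 hmono
  obtain ⟨m, rfl⟩ : ∃ m, ℓ = m + 1 := ⟨ℓ - 1, (Nat.succ_pred_eq_of_pos hℓ).symm⟩
  simp only [Nat.add_sub_cancel]
  set L : ℝ := Real.logb 2 (a m) with hL
  have haL : 1 ≤ a m := ha1 m (by omega)
  have hL0 : 0 ≤ L := Real.logb_nonneg one_lt_two haL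
  set p : ℕ → ℝ := fun k => if k = m then Real.logb 2 (a 0)
    else Real.logb 2 (a (k + 1)) - Real.logb 2 (a k) with hp
  have hpos : ∀ k, k < m + 1 → 0 < a k := fun k hk => lt_of_lt_of_le one_pos (ha1 k hk)
  have hp_nonneg : ∀ k ∈ Finset.range (m + 1), 0 ≤ p k := by
    intro k hk
    rw [Finset.mem_range] at hk
    by_cases h : k = m
    · simp only [hp, h, if_pos rfl]
      exact Real.logb_nonneg one_lt_two (ha1 0 (by omega))
    · simp only [hp, if_neg h]
      have hkm : k + 1 < m + 1 := by omega
      have := hmono k hkm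
      have h1 : 0 < a k := hpos k (by omega)
      have := Real.logb_le_logb_of_le one_lt_two h1 this
      linarith
  have hsum : ∑ k ∈ Finset.range (m + 1), p k = L := by
    rw [Finset.sum_range_succ]
    have h1 : ∀ k ∈ Finset.range m, p k = Real.logb 2 (a (k + 1)) - Real.logb 2 (a k) := by
      intro k hk
      rw [Finset.mem_range] at hk
      simp only [hp, if_neg (by omega : k ≠ m)]
    rw [Finset.sum_congr rfl h1, Finset.sum_range_sub (fun k => Real.logb 2 (a k))]
    simp only [hp, if_pos rfl]
    ring
  -- Jensen
  have hcard : (0:ℝ) < (m + 1 : ℕ) := by positivity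
  have hw : ∑ _k ∈ Finset.range (m + 1), (1 : ℝ) / (m + 1 : ℕ) = 1 := by
    rw [Finset.sum_const, Finset.card_range, nsmul_eq_mul]
    field_simp
  have jensen := g_concave.le_map_sum (t := Finset.range (m + 1))
    (w := fun _ => (1 : ℝ) / (m + 1 : ℕ)) (p := p)
    (fun i _ => by positivity) hw (fun i hi => hp_nonneg i hi)
  have hsmul : ∑ i ∈ Finset.range (m + 1), ((1 : ℝ) / (m + 1 : ℕ)) • p i = L / (m + 1 : ℕ) := by
    simp only [smul_eq_mul]
    rw [← Finset.mul_sum, hsum]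
    ring
  rw [hsmul] at jensen
  simp only [smul_eq_mul] at jensen
  rw [← Finset.mul_sum] at jensen
  have hsum_le : ∑ i ∈ Finset.range (m + 1), g (p i) ≤ ((m : ℝ) + 1) * g (L / (m + 1 : ℕ)) := by
    have := mul_le_mul_of_nonneg_left jensen (le_of_lt hcard)
    push_cast at this ⊢
    rw [mul_comm ((1:ℝ)/(m+1)) _, ← mul_assoc] at this
    field_simp at this
    convert this using 2 <;> push_cast <;> ring
  constructor
  · -- first inequality
    have hterm : ∀ k ∈ Finset.range m,
        g (Real.logb 2 (a (k + 1) / a k)) = g (p k) := by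
      intro k hk
      rw [Finset.mem_range] at hk
      have h1 : a k ≠ 0 := (hpos k (by omega)).ne'
      have h2 : a (k + 1) ≠ 0 := (hpos (k + 1) (by omega)).ne'
      rw [Real.logb_div h2 h1]
      simp only [hp, if_neg (by omega : k ≠ m)]
    rw [Finset.sum_congr rfl hterm]
    have hstep : ∑ k ∈ Finset.range m, g (p k) ≤ ∑ k ∈ Finset.range (m + 1), g (p k) := by
      rw [Finset.sum_range_succ]
      have := g_nonneg (hp_nonneg m (Finset.mem_range.mpr (by omega)))
      linarith
    calc ∑ k ∈ Finset.range m, g (p k)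
        ≤ ∑ k ∈ Finset.range (m + 1), g (p k) := hstep
      _ ≤ ((m : ℝ) + 1) * g (L / (m + 1 : ℕ)) := hsum_le
      _ = ((m + 1 : ℕ) : ℝ) * g (L / ((m + 1 : ℕ) : ℝ)) := by push_cast; ring_nf
  · -- second inequality
    have harg : 0 ≤ L / ((m + 1 : ℕ) : ℝ) := by positivity
    have h1 : g (L / ((m + 1 : ℕ) : ℝ)) ≤ L / ((m + 1 : ℕ) : ℝ) := g_le_self harg
    have h2 : ((m + 1 : ℕ) : ℝ) * g (L / ((m + 1 : ℕ) : ℝ)) ≤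
        ((m + 1 : ℕ) : ℝ) * (L / ((m + 1 : ℕ) : ℝ)) :=
      mul_le_mul_of_nonneg_left h1 (le_of_lt hcard)
    have h3 : ((m + 1 : ℕ) : ℝ) * (L / ((m + 1 : ℕ) : ℝ)) = L := by
      field_simp
    rw [h3] at h2
    linarith
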